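/- Let κ be an infinite cardinal with κ ≤ 𝔠 and let L, S be vector subspaces of ℝ^κ such that L is closed, the algebraic dimension of L is infinite, and the algebraic dimension of S is less than 𝔠. Then L contains a dense vector subspace M of countable algebraic dimension with M ∩ S = {0}. -/

import Mathlib

open Set Filter Function Topology Cardinal

noncomputable section


open Set Filter Function

/-- If a finite linear combination of geometric sequences vanishes, all coefficients vanish. -/
lemma aux_sum_mul_pow_eq_zero {s : Finset ℝ} {g : ℝ → ℝ}
    (h : ∀ k : ℕ, ∑ t ∈ s, g t * t ^ k = 0) : ∀ t ∈ s, g t = 0 := by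
  have key : ∀ p : Polynomial ℝ, ∑ t ∈ s, g t * p.eval t = 0 := by
    intro p
    have : ∀ t : ℝ, p.eval t = ∑ k ∈ Finset.range (p.natDegree + 1), p.coeff k * t ^ k := by
      intro t; exact Polynomial.eval_eq_sum_range (p := p) t
    simp_rw [this, Finset.mul_sum]
    rw [Finset.sum_comm]
    have : ∀ k ∈ Finset.range (p.natDegree + 1),
        ∑ t ∈ s, g t * (p.coeff k * t ^ k) = 0 := by
      intro k _
      have := h k
      calc ∑ t ∈ s, g t * (p.coeff k * t ^ k)
          = p.coeff k * ∑ t ∈ s, g t * t ^ k := by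
            rw [Finset.mul_sum]; apply Finset.sum_congr rfl; intro t _; ring
        _ = 0 := by rw [this, mul_zero]
    exact Finset.sum_eq_zero this
  intro t ht
  set p : Polynomial ℝ := ∏ t' ∈ s.erase t, (Polynomial.X - Polynomial.C t') with hp
  have hpt : p.eval t ≠ 0 := by
    rw [hp, Polynomial.eval_prod]
    apply Finset.prod_ne_zero_iff.2
    intro t' ht'
    have : t' ≠ t := Finset.ne_of_mem_erase ht'
    simp [sub_ne_zero.2 (Ne.symm this)]
  have hzero : ∀ t'' ∈ s, t'' ≠ t → g t'' * p.eval t'' = 0 := by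
    intro t'' ht'' hne
    have : p.eval t'' = 0 := by
      rw [hp, Polynomial.eval_prod]
      apply Finset.prod_eq_zero (Finset.mem_erase.2 ⟨hne, ht''⟩)
      simp
    rw [this, mul_zero]
  have := key p
  rw [Finset.sum_eq_single_of_mem t ht (fun t'' h1 h2 => hzero t'' h1 h2)] at this
  exact (mul_eq_zero.1 this).resolve_right hpt

/-- Shifted version. -/
lemma aux_sum_mul_pow_sub_eq_zero {s : Finset ℝ} {t₀ : ℝ} (ht₀ : t₀ ∉ s) {g : ℝ → ℝ}
    (h : ∀ k : ℕ, ∑ t ∈ s, g t * (t ^ k - t₀ ^ k) = 0) : ∀ t ∈ s, g t = 0 := by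
  classical
  set g' : ℝ → ℝ := fun t => if t = t₀ then -∑ t' ∈ s, g t' else g t with hg'
  have hrel : ∀ k : ℕ, ∑ t ∈ insert t₀ s, g' t * t ^ k = 0 := by
    intro k
    rw [Finset.sum_insert ht₀]
    have h1 : ∑ t ∈ s, g' t * t ^ k = ∑ t ∈ s, g t * t ^ k := by
      apply Finset.sum_congr rfl; intro t ht
      have : t ≠ t₀ := fun he => ht₀ (he ▸ ht)
      simp [hg', this]
    rw [h1]
    have h2 := h k
    have h3 : ∑ t ∈ s, g t * (t ^ k - t₀ ^ k)
        = (∑ t ∈ s, g t * t ^ k) - (∑ t ∈ s, g t) * t₀ ^ k := by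
      rw [Finset.sum_mul, ← Finset.sum_sub_distrib]
      apply Finset.sum_congr rfl; intro t _; ring
    rw [h3, sub_eq_zero] at h2
    simp [hg', h2]
  have := aux_sum_mul_pow_eq_zero hrel
  intro t ht
  have h4 := this t (Finset.mem_insert_of_mem ht)
  have : t ≠ t₀ := fun he => ht₀ (he ▸ ht)
  simpa [hg', this] using h4

/-- The shifted geometric family in `ℕ → ℝ` is linearly independent. -/
lemma aux_linearIndependent_geom_sub {s : Set ℝ} {t₀ : ℝ} (ht₀ : t₀ ∉ s) :
    LinearIndependent ℝ (fun t : s => (fun k : ℕ => (t : ℝ) ^ k - t₀ ^ k)) := by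
  rw [linearIndependent_iff']
  intro F g hF i hi
  classical
  set g' : ℝ → ℝ := fun t => if ht : t ∈ s then (if h2 : ⟨t, ht⟩ ∈ F then g ⟨t, ht⟩ else 0) else 0
    with hg'
  have himage : ∀ k : ℕ, ∑ t ∈ F.image (fun a : s => (a : ℝ)), g' t * (t ^ k - t₀ ^ k) = 0 := by
    intro k
    rw [Finset.sum_image (by intro a _ b _ h; exact Subtype.ext h)]
    have := congrFun hF k
    simp only [Finset.sum_apply, Pi.smul_apply, smul_eq_mul, Pi.zero_apply] at this
    rw [← this]
    apply Finset.sum_congr rfl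
    intro a ha
    simp [hg', a.2, ha]
  have ht₀' : t₀ ∉ F.image (fun a : s => (a : ℝ)) := by
    intro hmem
    rcases Finset.mem_image.1 hmem with ⟨a, _, ha⟩
    exact ht₀ (ha ▸ a.2)
  have := aux_sum_mul_pow_sub_eq_zero ht₀' himage (i : ℝ)
    (Finset.mem_image.2 ⟨i, hi, rfl⟩)
  simpa [hg', i.2, hi] using this


open Set Filter Function Topology

variable {V : Type*} [AddCommGroup V] [Module ℝ V]

/-- If `g` is in the span of a family of functionals, the `⨅`-comap filter at `0` refines
`comap g (𝓝 0)`. -/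
lemma aux_iInf_comap_le_of_mem_span {κ : Type*} (fam : κ → (V →ₗ[ℝ] ℝ)) {g : V →ₗ[ℝ] ℝ}
    (hg : g ∈ Submodule.span ℝ (Set.range fam)) :
    (⨅ k, comap (fam k) (𝓝 (0 : ℝ))) ≤ comap g (𝓝 (0 : ℝ)) := by
  set F := ⨅ k, comap (fam k) (𝓝 (0 : ℝ)) with hF
  rw [← tendsto_iff_comap]
  induction hg using Submodule.span_induction with
  | mem f hf =>
      rcases hf with ⟨k, rfl⟩
      have : F ≤ comap (fam k) (𝓝 (0 : ℝ)) := iInf_le _ k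
      exact (tendsto_comap).mono_left this
  | zero => exact (tendsto_const_nhds : Tendsto (fun _ : V => (0:ℝ)) F (𝓝 0))
  | add x y hx hy hx' hy' =>
      have := hx'.add hy'
      rw [zero_add] at this
      exact this
  | smul c x hx hx' =>
      have := hx'.const_mul c
      simp only [mul_zero] at this
      exact this

/-- A finite linearly independent family of functionals is jointly surjective. -/
lemma aux_surjective_pi_of_linearIndependent {G : Type*} [Finite G]
    (φ : G → (V →ₗ[ℝ] ℝ)) (hφ : LinearIndependent ℝ φ) :
    Function.Surjective (LinearMap.pi φ : V →ₗ[ℝ] (G → ℝ)) := by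
  classical
  have := Fintype.ofFinite G
  by_contra hns
  have hlt : LinearMap.range (LinearMap.pi φ) < ⊤ := by
    rcases lt_or_eq_of_le (le_top : LinearMap.range (LinearMap.pi φ) ≤ ⊤) with h | h
    · exact h
    · exact absurd (LinearMap.range_eq_top.1 h) hns
  obtain ⟨f, hf0, hfmap⟩ := Submodule.exists_dual_map_eq_bot_of_lt_top hlt inferInstance
  set c : G → ℝ := fun g => f (Pi.single g 1) with hc
  have hrepr : ∀ x : G → ℝ, f x = ∑ g, x g * c g := by
    intro x
    have hx : x = ∑ g, x g • (Pi.single g (1:ℝ) : G → ℝ) := by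
      ext j
      simp [Pi.single_apply, Finset.sum_ite_eq' Finset.univ j]
    conv_lhs => rw [hx]
    rw [map_sum]
    apply Finset.sum_congr rfl
    intro g _
    rw [map_smul]; simp [hc]
  have hker : ∀ v : V, f (LinearMap.pi φ v) = 0 := by
    intro v
    have : LinearMap.pi φ v ∈ LinearMap.range (LinearMap.pi φ) := ⟨v, rfl⟩
    have h2 : f (LinearMap.pi φ v) ∈ Submodule.map f (LinearMap.range (LinearMap.pi φ)) :=
      Submodule.mem_map_of_mem this
    rw [hfmap] at h2
    simpa using h2
  have hcomb : ∑ g, c g • φ g = 0 := by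
    ext v
    have := hker v
    rw [hrepr] at this
    simpa [LinearMap.pi_apply, mul_comm] using this
  have hc0 : ∀ g, c g = 0 := by
    have := (Fintype.linearIndependent_iff.1 hφ) c (by simpa using hcomb)
    exact this
  apply hf0
  apply LinearMap.ext
  intro x
  rw [hrepr]
  simp [hc0]


open Set Function

/-- Countable interpolation: a table of rationals indexed by finite 0-1 strings can approximate
any real data on a finite set, through an embedding into Cantor space. -/
lemma aux_interp {κ : Type} (u : κ ↪ (ℕ → Bool)) (G : Finset κ) (c : κ → ℝ) {ε : ℝ}
    (hε : 0 < ε) :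
    ∃ σ : Σ n : ℕ, (Fin n → Bool) → ℚ,
      ∀ b ∈ G, |(σ.2 (fun k : Fin σ.1 => u b k) : ℝ) - c b| < ε := by
  classical
  have hdiff : ∀ b b' : κ, b ≠ b' → ∃ k, u b k ≠ u b' k := by
    intro b b' hne
    by_contra hc
    push_neg at hc
    exact hne (u.injective (funext hc))
  set d : κ → κ → ℕ := fun b b' => if h : b = b' then 0 else Nat.find (hdiff b b' h) + 1 with hd
  set n : ℕ := G.sup fun b => G.sup fun b' => d b b' with hn
  have hsep : ∀ b ∈ G, ∀ b' ∈ G, b ≠ b' →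
      (fun k : Fin n => u b k) ≠ (fun k : Fin n => u b' k) := by
    intro b hb b' hb' hne heq
    have hdn : d b b' = Nat.find (hdiff b b' hne) + 1 := dif_neg hne
    have hle : d b b' ≤ n := by
      calc d b b' ≤ G.sup fun b'' => d b b'' := Finset.le_sup hb'
        _ ≤ n := Finset.le_sup (f := fun b'' => G.sup fun b' => d b'' b') hb
    have hlt : Nat.find (hdiff b b' hne) < n := by omega
    have := congrFun heq ⟨Nat.find (hdiff b b' hne), hlt⟩
    exact Nat.find_spec (hdiff b b' hne) this
  set r : κ → ℚ := fun b => Classical.choose (exists_rat_near (c b) hε) with hr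
  have hrspec : ∀ b, |c b - (r b : ℝ)| < ε := fun b =>
    Classical.choose_spec (exists_rat_near (c b) hε)
  set tab : (Fin n → Bool) → ℚ := fun t =>
    if h : ∃ b ∈ G, (fun k : Fin n => u b k) = t then r h.choose else 0 with htab
  refine ⟨⟨n, tab⟩, ?_⟩
  intro b hb
  have hx : ∃ b' ∈ G, (fun k : Fin n => u b' k) = (fun k : Fin n => u b k) := ⟨b, hb, rfl⟩
  have htb : tab (fun k : Fin n => u b k) = r b := by
    rw [htab]
    simp only [dif_pos hx]
    obtain ⟨hbG, heq⟩ := hx.choose_spec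
    by_cases hc2 : hx.choose = b
    · rw [hc2]
    · exact absurd heq (hsep _ hbG _ hb hc2)
  show |(tab (fun k : Fin n => u b k) : ℝ) - c b| < ε
  rw [htb, abs_sub_comm]
  exact hrspec b


/-- Generic strong recursion producing a sequence with a fixed-point property. -/
lemma aux_rec {α : Type*} (g : (n : ℕ) → (Fin n → α) → α) :
    ∃ x : ℕ → α, ∀ n, x n = g n (fun j : Fin n => x j) := by
  let pre : (n : ℕ) → Fin n → α := fun n =>
    Nat.rec Fin.elim0 (fun n ih => Fin.snoc ih (g n ih)) n
  have hstep : ∀ n, pre (n + 1) = Fin.snoc (pre n) (g n (pre n)) := fun _ => rfl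
  let x : ℕ → α := fun n => g n (pre n)
  have hx : ∀ n, x n = g n (pre n) := fun _ => rfl
  have hclaim : ∀ n, pre n = fun j : Fin n => x j := by
    intro n
    induction n with
    | zero => funext j; exact j.elim0
    | succ n ih =>
        funext j
        refine Fin.lastCases ?_ ?_ j
        · rw [hstep, Fin.snoc_last, hx, Fin.val_last]
        · intro i
          rw [hstep, Fin.snoc_castSucc, ih, Fin.coe_castSucc]
  refine ⟨x, fun n => ?_⟩
  rw [hx n, hclaim n]


open Set Function Cardinal

/-- Each "uniform ball" around a countable-table function contains a point of `L` outside any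
subspace of rank `< 𝔠`. -/
lemma aux_fat {ι κ : Type} {L : Submodule ℝ (ι → ℝ)} (φ : κ → (↥L →ₗ[ℝ] ℝ))
    (bn : ℕ ↪ κ) (hsurj : Function.Surjective (LinearMap.pi φ : ↥L →ₗ[ℝ] (κ → ℝ)))
    (F0 : κ → ℝ) (m : ℕ) (W : Submodule ℝ (ι → ℝ)) (hW : Module.rank ℝ ↥W < 𝔠) :
    ∃ x : ↥L, (∀ b, |(LinearMap.pi φ) x b - F0 b| < 1 / ((m : ℝ) + 1)) ∧
      (x : ι → ℝ) ∉ W := by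
  classical
  set c₀ : ℝ := 1 / (2 * ((m : ℝ) + 1)) with hc₀
  have hm1 : (0 : ℝ) < (m : ℝ) + 1 := by positivity
  have hc₀pos : 0 < c₀ := by positivity
  have hc₀lt : c₀ < 1 / ((m : ℝ) + 1) := by
    rw [hc₀, div_lt_div_iff₀ (by positivity) hm1]
    nlinarith
  set hfun : ℝ → κ → ℝ := fun t => Function.extend bn (fun k => t ^ k) (fun _ => 0) with hhfun
  have hbn : ∀ t (k : ℕ), hfun t (bn k) = t ^ k := fun t k =>
    bn.injective.extend_apply _ _ k
  have hbound : ∀ t ∈ Ioo (0:ℝ) 1, ∀ b, |hfun t b| ≤ 1 := by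
    intro t ht b
    by_cases hb : ∃ k, bn k = b
    · obtain ⟨k, rfl⟩ := hb
      rw [hbn]
      rw [abs_of_nonneg (pow_nonneg (le_of_lt ht.1) k)]
      exact pow_le_one₀ (le_of_lt ht.1) (le_of_lt ht.2)
    · show |Function.extend (⇑bn) (fun k => t ^ k) (fun _ => (0:ℝ)) b| ≤ 1
      rw [Function.extend_apply' _ _ _ hb]
      norm_num
  set y : ℝ → κ → ℝ := fun t b => F0 b + c₀ * hfun t b with hy
  set xt : ℝ → ↥L := fun t => Classical.choose (hsurj (y t)) with hxtdef
  have hxt : ∀ t, (LinearMap.pi φ) (xt t) = y t := fun t => Classical.choose_spec (hsurj (y t))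
  have hxtN : ∀ t ∈ Ioo (0:ℝ) 1, ∀ b, |(LinearMap.pi φ) (xt t) b - F0 b| < 1 / ((m:ℝ)+1) := by
    intro t ht b
    rw [hxt]
    have : y t b - F0 b = c₀ * hfun t b := by rw [hy]; ring
    rw [this, abs_mul, abs_of_pos hc₀pos]
    calc c₀ * |hfun t b| ≤ c₀ * 1 := by
          exact mul_le_mul_of_nonneg_left (hbound t ht b) (le_of_lt hc₀pos)
      _ = c₀ := mul_one _
      _ < 1 / ((m:ℝ)+1) := hc₀lt
  by_contra hcon
  push_neg at hcon
  have hALL : ∀ t ∈ Ioo (0:ℝ) 1, ((xt t : ↥L) : ι → ℝ) ∈ W := fun t ht =>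
    hcon (xt t) (hxtN t ht)
  set t₀ : ℝ := 3/4 with ht₀def
  set s : Set ℝ := Ioo (0:ℝ) (1/2) with hs
  have ht₀mem : t₀ ∈ Ioo (0:ℝ) 1 := by rw [ht₀def]; constructor <;> norm_num
  have ht₀s : t₀ ∉ s := by
    rw [hs, ht₀def]
    intro h
    have := h.2
    norm_num at this
  have hsmem : ∀ t : ↥s, (t : ℝ) ∈ Ioo (0:ℝ) 1 := by
    intro t
    obtain ⟨h1, h2⟩ := t.2
    exact ⟨h1, by linarith⟩
  set C : ↥s → ↥L := fun t => xt t - xt t₀ with hC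
  set J : ↥L →ₗ[ℝ] (ℕ → ℝ) := c₀⁻¹ • ((LinearMap.funLeft ℝ ℝ bn).comp (LinearMap.pi φ))
    with hJ
  have hJC : (⇑J ∘ C) = fun t : ↥s => (fun k : ℕ => (t : ℝ) ^ k - t₀ ^ k) := by
    funext t k
    show c₀⁻¹ * ((LinearMap.pi φ) (xt t - xt t₀) (bn k)) = (t:ℝ)^k - t₀^k
    rw [map_sub, hxt, hxt]
    have : y (t:ℝ) (bn k) - y t₀ (bn k) = c₀ * ((t:ℝ)^k - t₀^k) := by
      rw [hy]
      simp only [hbn]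
      ring
    simp only [Pi.sub_apply]
    rw [this, ← mul_assoc, inv_mul_cancel₀ (ne_of_gt hc₀pos), one_mul]
  have hCind : LinearIndependent ℝ C := by
    apply LinearIndependent.of_comp J
    rw [hJC]
    exact aux_linearIndependent_geom_sub ht₀s
  have hmemW : ∀ t : ↥s, ((C t : ↥L) : ι → ℝ) ∈ W := by
    intro t
    have h1 := hALL (t : ℝ) (hsmem t)
    have h2 := hALL t₀ ht₀mem
    rw [hC]
    simp only [Submodule.coe_sub]
    exact sub_mem h1 h2
  set C' : ↥s → ↥W := fun t => ⟨((C t : ↥L) : ι → ℝ), hmemW t⟩ with hC'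
  have hC'ind : LinearIndependent ℝ C' := by
    apply LinearIndependent.of_comp W.subtype
    have heq : (⇑W.subtype ∘ C') = (⇑L.subtype ∘ C) := rfl
    rw [heq]
    exact hCind.map' L.subtype (Submodule.ker_subtype L)
  have hcard : 𝔠 ≤ Module.rank ℝ ↥W := by
    calc 𝔠 = #↥s := (Cardinal.mk_Ioo_real (by norm_num : (0:ℝ) < 1/2)).symm
      _ ≤ Module.rank ℝ ↥W := hC'ind.cardinal_le_rank
  exact absurd hW (not_lt.2 hcard)


open Set Function

/-- π-network property: every open set around a point of `L` contains a whole uniform ball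
around a rational table function. -/
lemma aux_pinet {ι κ : Type} {L : Submodule ℝ (ι → ℝ)} (φ : κ → (↥L →ₗ[ℝ] ℝ))
    (u : κ ↪ (ℕ → Bool))
    (hrepr : ∀ i : ι, ∃ r : κ →₀ ℝ,
      ((LinearMap.proj i).comp L.subtype : ↥L →ₗ[ℝ] ℝ) = r.sum fun b c => c • φ b)
    (z : ↥L) (O : Set (ι → ℝ)) (hO : IsOpen O) (hzO : (z : ι → ℝ) ∈ O) :
    ∃ (σ : Σ n : ℕ, (Fin n → Bool) → ℚ) (m : ℕ),
      ∀ x : ↥L, (∀ b, |(LinearMap.pi φ) x b - (σ.2 (fun k : Fin σ.1 => u b k) : ℝ)|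
        < 1 / ((m : ℝ) + 1)) → (x : ι → ℝ) ∈ O := by
  classical
  obtain ⟨I, v, h1, h2⟩ := (isOpen_pi_iff.1 hO) (z : ι → ℝ) hzO
  set r : ι → (κ →₀ ℝ) := fun i => (hrepr i).choose with hrdef
  have hre : ∀ i, ((LinearMap.proj i).comp L.subtype : ↥L →ₗ[ℝ] ℝ)
      = (r i).sum fun b c => c • φ b := fun i => (hrepr i).choose_spec
  have hball : ∀ i ∈ I, ∃ ε, 0 < ε ∧ Metric.ball ((z : ι → ℝ) i) ε ⊆ v i := by
    intro i hi
    obtain ⟨ε, hε1, hε2⟩ := Metric.isOpen_iff.1 (h1 i hi).1 _ (h1 i hi).2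
    exact ⟨ε, hε1, hε2⟩
  set εf : ι → ℝ := fun i => if h : i ∈ I then (hball i h).choose else 1 with hεfdef
  have hεf : ∀ i ∈ I, 0 < εf i ∧ Metric.ball ((z : ι → ℝ) i) (εf i) ⊆ v i := by
    intro i hi
    simp only [hεfdef, dif_pos hi]
    exact (hball i hi).choose_spec
  set Ci : ι → ℝ := fun i => ∑ b ∈ (r i).support, |r i b| with hCidef
  have hCi : ∀ i, 0 ≤ Ci i := fun i => Finset.sum_nonneg fun b _ => abs_nonneg _
  have hmex : ∀ i ∈ I, ∃ mm : ℕ, Ci i * (2 / ((mm : ℝ) + 1)) < εf i := by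
    intro i hi
    obtain ⟨mm, hm⟩ := exists_nat_gt (2 * Ci i / εf i)
    have hε := (hεf i hi).1
    have h1' : 2 * Ci i < (mm : ℝ) * εf i := by rwa [div_lt_iff₀ hε] at hm
    have hm1 : (0 : ℝ) < (mm : ℝ) + 1 := by positivity
    refine ⟨mm, ?_⟩
    rw [show Ci i * (2 / ((mm : ℝ) + 1)) = (2 * Ci i) / ((mm : ℝ) + 1) by ring,
      div_lt_iff₀ hm1]
    nlinarith
  set mf : ι → ℕ := fun i => if h : i ∈ I then (hmex i h).choose else 0 with hmfdef
  set m : ℕ := I.sup mf with hmdef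
  have hmf : ∀ i ∈ I, Ci i * (2 / ((mf i : ℝ) + 1)) < εf i := by
    intro i hi
    simp only [hmfdef, dif_pos hi]
    exact (hmex i hi).choose_spec
  set G : Finset κ := I.biUnion (fun i => (r i).support) with hGdef
  obtain ⟨σ, hσ⟩ := aux_interp u G (fun b => (LinearMap.pi φ) z b)
    (show (0:ℝ) < 1 / ((m : ℝ) + 1) by positivity)
  refine ⟨σ, m, ?_⟩
  intro x hx
  apply h2
  rw [Set.mem_pi]
  intro i hi
  have hiF : i ∈ I := hi
  have hsum : (1:ℝ) / ((m:ℝ)+1) + 1 / ((m:ℝ)+1) = 2 / ((m:ℝ)+1) := by ring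
  have hclose : ∀ b ∈ (r i).support,
      |(LinearMap.pi φ) x b - (LinearMap.pi φ) z b| ≤ 2 / ((m : ℝ) + 1) := by
    intro b hb
    have hbG : b ∈ G := Finset.mem_biUnion.2 ⟨i, hiF, hb⟩
    have e1 := hx b
    have e2 := hσ b hbG
    calc |(LinearMap.pi φ) x b - (LinearMap.pi φ) z b|
        ≤ |(LinearMap.pi φ) x b - (σ.2 (fun k : Fin σ.1 => u b k) : ℝ)|
          + |(σ.2 (fun k : Fin σ.1 => u b k) : ℝ) - (LinearMap.pi φ) z b| :=
          abs_sub_le _ _ _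
      _ ≤ 2 / ((m : ℝ) + 1) := by rw [← hsum]; exact add_le_add (le_of_lt e1) (le_of_lt e2)
  have hcoord : (x : ι → ℝ) i - (z : ι → ℝ) i
      = ∑ b ∈ (r i).support, (r i) b * ((LinearMap.pi φ) x b - (LinearMap.pi φ) z b) := by
    have hxi : (x : ι → ℝ) i = ((r i).sum fun b c => c • φ b) x := by
      rw [← hre i]; rfl
    have hzi : (z : ι → ℝ) i = ((r i).sum fun b c => c • φ b) z := by
      rw [← hre i]; rfl
    rw [hxi, hzi]
    have hunf : ∀ w : ↥L, (((r i).sum fun b c => c • φ b) : ↥L →ₗ[ℝ] ℝ) w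
        = ∑ b ∈ (r i).support, (r i) b * φ b w := by
      intro w
      show ((∑ b ∈ (r i).support, (r i) b • φ b) : ↥L →ₗ[ℝ] ℝ) w = _
      rw [LinearMap.sum_apply]
      apply Finset.sum_congr rfl
      intro b _
      simp [smul_eq_mul]
    rw [hunf, hunf, ← Finset.sum_sub_distrib]
    apply Finset.sum_congr rfl
    intro b _
    simp only [LinearMap.smul_apply, smul_eq_mul, LinearMap.pi_apply]
    ring
  have hmlem : (2:ℝ) / ((m:ℝ)+1) ≤ 2 / ((mf i : ℝ) + 1) := by
    have hle : (mf i : ℝ) ≤ (m : ℝ) := Nat.cast_le.2 (Finset.le_sup hiF)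
    have h0 : (0:ℝ) < (mf i : ℝ) + 1 := by positivity
    rw [div_le_div_iff₀ (by positivity : (0:ℝ) < (m:ℝ)+1) h0]
    nlinarith
  have habs : |(x : ι → ℝ) i - (z : ι → ℝ) i| < εf i := by
    rw [hcoord]
    calc |∑ b ∈ (r i).support, (r i) b * ((LinearMap.pi φ) x b - (LinearMap.pi φ) z b)|
        ≤ ∑ b ∈ (r i).support, |(r i) b * ((LinearMap.pi φ) x b - (LinearMap.pi φ) z b)| :=
          Finset.abs_sum_le_sum_abs _ _
      _ = ∑ b ∈ (r i).support, |(r i) b| * |(LinearMap.pi φ) x b - (LinearMap.pi φ) z b| := by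
          apply Finset.sum_congr rfl; intro b _; rw [abs_mul]
      _ ≤ ∑ b ∈ (r i).support, |(r i) b| * (2 / ((m : ℝ) + 1)) :=
          Finset.sum_le_sum fun b hb =>
            mul_le_mul_of_nonneg_left (hclose b hb) (abs_nonneg _)
      _ = Ci i * (2 / ((m : ℝ) + 1)) := by rw [hCidef, Finset.sum_mul]
      _ ≤ Ci i * (2 / ((mf i : ℝ) + 1)) := mul_le_mul_of_nonneg_left hmlem (hCi i)
      _ < εf i := hmf i hiF
  have : (x : ι → ℝ) i ∈ Metric.ball ((z : ι → ℝ) i) (εf i) := by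
    rw [Metric.mem_ball, Real.dist_eq]
    exact habs
  exact (hεf i hiF).2 this


/-- The evaluation map of a basis of the span of the coordinate functionals on a
closed subspace of `ℝ^ι` is surjective. -/
lemma aux_surjective_T {ι : Type} {L : Submodule ℝ (ι → ℝ)} (hL : IsClosed (L : Set (ι → ℝ)))
    {κ : Type} (φ : κ → (↥L →ₗ[ℝ] ℝ))
    (hindep : LinearIndependent ℝ φ)
    (hspan : ∀ i : ι, ((LinearMap.proj i).comp L.subtype) ∈ Submodule.span ℝ (Set.range φ))
    (hmem : ∀ k, φ k ∈ Submodule.span ℝ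
      (Set.range (fun i : ι => (LinearMap.proj i).comp L.subtype))) :
    Function.Surjective (LinearMap.pi φ : ↥L →ₗ[ℝ] (κ → ℝ)) := by
  classical
  haveI : IsUniformAddGroup ↥L := L.toAddSubgroup.isUniformAddGroup
  haveI : CompleteSpace ↥L := hL.completeSpace_coe
  set e : ι → (↥L →ₗ[ℝ] ℝ) := fun i => (LinearMap.proj i).comp L.subtype with he
  set T : ↥L →ₗ[ℝ] (κ → ℝ) := LinearMap.pi φ with hT
  -- neighborhoods of zero in L
  have hnL : (𝓝 (0 : ↥L)) = ⨅ i, comap (e i) (𝓝 (0 : ℝ)) := by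
    have h0 : ((0 : ↥L) : ι → ℝ) = 0 := rfl
    rw [nhds_subtype (L : Set (ι → ℝ)) 0, h0, nhds_pi, Filter.pi, comap_iInf]
    simp only [comap_comap, Pi.zero_apply]
    rfl
  have hnT : comap (⇑T) (𝓝 (0 : κ → ℝ)) = ⨅ k, comap (φ k) (𝓝 (0 : ℝ)) := by
    rw [nhds_pi, Filter.pi, comap_iInf]
    simp only [comap_comap, Pi.zero_apply]
    rfl
  have hkey : comap (⇑T) (𝓝 (0 : κ → ℝ)) = 𝓝 (0 : ↥L) := by
    rw [hnT, hnL]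
    apply le_antisymm
    · exact le_iInf fun i => aux_iInf_comap_le_of_mem_span φ (hspan i)
    · exact le_iInf fun k => aux_iInf_comap_le_of_mem_span e (hmem k)
  have hUI : IsUniformInducing (⇑T) := by
    constructor
    rw [uniformity_eq_comap_nhds_zero (κ → ℝ), uniformity_eq_comap_nhds_zero ↥L, comap_comap]
    have hfun : ((fun x : (κ → ℝ) × (κ → ℝ) => x.2 - x.1) ∘ fun p : ↥L × ↥L => (T p.1, T p.2))
        = ⇑T ∘ (fun x : ↥L × ↥L => x.2 - x.1) := by
      funext p
      simp [Function.comp, map_sub]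
    rw [hfun, ← comap_comap, hkey]
  have hdense : DenseRange (⇑T) := by
    rw [DenseRange, dense_iff_inter_open]
    intro U hU hne
    obtain ⟨y₀, hy₀⟩ := hne
    obtain ⟨I, u, h1, h2⟩ := (isOpen_pi_iff.1 hU) y₀ hy₀
    have hsub : Function.Surjective (LinearMap.pi (fun b : ↥(I : Set κ) => φ b)) :=
      aux_surjective_pi_of_linearIndependent _ (hindep.comp _ Subtype.val_injective)
    obtain ⟨x, hx⟩ := hsub (fun b : ↥(I : Set κ) => y₀ b)
    refine ⟨T x, h2 ?_, Set.mem_range_self x⟩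
    intro k hk
    have : T x k = y₀ k := by
      have := congrFun hx ⟨k, hk⟩
      simpa [hT] using this
    rw [this]
    exact (h1 k hk).2
  have hclosed : IsClosed (Set.range (⇑T)) := hUI.isComplete_range.isClosed
  have : Set.range (⇑T) = Set.univ := by
    rw [← hclosed.closure_eq, hdense.closure_eq]
  exact Set.range_eq_univ.1 this


open Set Function Cardinal

lemma aux_main {ι : Type} (L S : Submodule ℝ (ι → ℝ))
    {κ : Type} [Infinite κ] (φ : κ → (↥L →ₗ[ℝ] ℝ)) (u : κ ↪ (ℕ → Bool))
    (hsurj : Function.Surjective (LinearMap.pi φ : ↥L →ₗ[ℝ] (κ → ℝ)))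
    (hrepr : ∀ i : ι, ∃ r : κ →₀ ℝ,
      ((LinearMap.proj i).comp L.subtype : ↥L →ₗ[ℝ] ℝ) = r.sum fun b c => c • φ b)
    (hdimS : Module.rank ℝ ↥S < Cardinal.continuum) :
    ∃ M : Submodule ℝ (ι → ℝ), M ≤ L ∧
      Module.rank ℝ ↥M = Cardinal.aleph0 ∧
      (L : Set (ι → ℝ)) ⊆ closure (M : Set (ι → ℝ)) ∧
      M ⊓ S = ⊥ := by
  classical
  obtain ⟨en, hen⟩ := exists_surjective_nat ((Σ n : ℕ, (Fin n → Bool) → ℚ) × ℕ)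
  set bn : ℕ ↪ κ := Infinite.natEmbedding κ with hbn
  set N : ((Σ n : ℕ, (Fin n → Bool) → ℚ) × ℕ) → ↥L → Prop := fun a x =>
    ∀ b, |(LinearMap.pi φ) x b - ((a.1.2 (fun k : Fin a.1.1 => u b k)) : ℝ)|
      < 1/((a.2 : ℝ)+1) with hNdef
  have hWrank : ∀ (n : ℕ) (prev : Fin n → ↥L),
      Module.rank ℝ
        ↥(S ⊔ Submodule.span ℝ (Set.range fun j => ((prev j : ↥L) : ι → ℝ))) < 𝔠 := by
    intro n prev
    apply lt_of_le_of_lt (Submodule.rank_add_le_rank_add_rank _ _)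
    apply Cardinal.add_lt_of_lt Cardinal.aleph0_le_continuum hdimS
    apply lt_of_le_of_lt (rank_span_le _)
    apply lt_of_le_of_lt Cardinal.mk_range_le
    rw [Cardinal.mk_fin]
    exact lt_of_lt_of_le (Cardinal.nat_lt_aleph0 n) Cardinal.aleph0_le_continuum
  set g : (n : ℕ) → (Fin n → ↥L) → ↥L := fun n prev =>
    Classical.choose (aux_fat φ bn hsurj
      (fun b => (((en n).1.2 (fun k : Fin (en n).1.1 => u b k)) : ℝ)) (en n).2 _
      (hWrank n prev)) with hgdef
  have hgspec : ∀ n prev, N (en n) (g n prev) ∧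
      ((g n prev : ↥L) : ι → ℝ) ∉
        (S ⊔ Submodule.span ℝ (Set.range fun j => ((prev j : ↥L) : ι → ℝ))) := by
    intro n prev
    exact Classical.choose_spec (aux_fat φ bn hsurj
      (fun b => (((en n).1.2 (fun k : Fin (en n).1.1 => u b k)) : ℝ)) (en n).2 _
      (hWrank n prev))
  obtain ⟨x, hxfix⟩ := aux_rec g
  have hxN : ∀ n, N (en n) (x n) := by
    intro n
    rw [hxfix n]
    exact (hgspec n _).1
  set v : ℕ → (ι → ℝ) := fun n => ((x n : ↥L) : ι → ℝ) with hvdef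
  have hxW : ∀ n, v n ∉
      (S ⊔ Submodule.span ℝ (Set.range fun j : Fin n => v j)) := by
    intro n
    have h2 := (hgspec n (fun j : Fin n => x j)).2
    rw [← hxfix n] at h2
    exact h2
  -- basis set of S
  set sB : Set (ι → ℝ) := Subtype.val '' (Set.range ⇑(Module.Basis.ofVectorSpace ℝ ↥S)) with hsBdef
  have hspan_sB : Submodule.span ℝ sB = S := by
    rw [hsBdef, ← Set.range_comp]
    have : Set.range (Subtype.val ∘ ⇑(Module.Basis.ofVectorSpace ℝ ↥S))
        = ⇑S.subtype '' Set.range ⇑(Module.Basis.ofVectorSpace ℝ ↥S) := by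
      rw [Set.range_comp]; rfl
    rw [this, Submodule.span_image, Module.Basis.span_eq, Submodule.map_top, Submodule.range_subtype]
  have hsBind : LinearIndependent ℝ (fun y : ↥sB => (y : ι → ℝ)) := by
    have h1 : LinearIndependent ℝ (⇑S.subtype ∘ ⇑(Module.Basis.ofVectorSpace ℝ ↥S)) :=
      (Module.Basis.ofVectorSpace ℝ ↥S).linearIndependent.map' S.subtype (Submodule.ker_subtype S)
    have h2 := h1.linearIndepOn_id
    have : Set.range (⇑S.subtype ∘ ⇑(Module.Basis.ofVectorSpace ℝ ↥S)) = sB := by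
      rw [Set.range_comp]; rfl
    rwa [this] at h2
  have hrangeIio : ∀ n : ℕ, Set.range (fun j : Fin n => v (j : ℕ)) = v '' (Set.Iio n) := by
    intro n
    ext w
    constructor
    · rintro ⟨j, rfl⟩; exact ⟨j, j.2, rfl⟩
    · rintro ⟨k, hk, rfl⟩; exact ⟨⟨k, hk⟩, rfl⟩
  have hnotmem : ∀ n, v n ∉ Submodule.span ℝ (sB ∪ v '' Set.Iio n) := by
    intro n
    rw [Submodule.span_union, hspan_sB, ← hrangeIio n]
    exact hxW n
  have hAind : ∀ n : ℕ, LinearIndependent ℝ (fun y : ↥(sB ∪ v '' Set.Iio n) => (y : ι → ℝ)) := by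
    intro n
    induction n with
    | zero =>
        have h0 : v '' Set.Iio 0 = ∅ := by
          have : Set.Iio (0:ℕ) = ∅ := by ext k; simp
          rw [this, Set.image_empty]
        rw [h0, Set.union_empty]
        exact hsBind
    | succ n ih =>
        have hIio : Set.Iio (n+1) = insert n (Set.Iio n) := by
          ext k; simp only [Set.mem_Iio, Set.mem_insert_iff]; omega
        rw [hIio, Set.image_insert_eq, Set.union_insert]
        exact LinearIndepOn.id_insert ih (hnotmem n)
  have hUeq : sB ∪ Set.range v = ⋃ n, (sB ∪ v '' Set.Iio n) := by
    apply Set.Subset.antisymm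
    · intro w hw
      rcases hw with hw | hw
      · exact Set.mem_iUnion.2 ⟨0, Or.inl hw⟩
      · rcases hw with ⟨n, rfl⟩
        exact Set.mem_iUnion.2 ⟨n+1, Or.inr ⟨n, Set.mem_Iio.2 (Nat.lt_succ_self n), rfl⟩⟩
    · intro w hw
      rcases Set.mem_iUnion.1 hw with ⟨n, hn⟩
      rcases hn with hn | hn
      · exact Or.inl hn
      · rcases hn with ⟨k, _, rfl⟩
        exact Or.inr ⟨k, rfl⟩
  have hUind : LinearIndependent ℝ (fun y : ↥(sB ∪ Set.range v) => (y : ι → ℝ)) := by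
    rw [hUeq]
    apply linearIndepOn_iUnion_of_directed (v := id)
    · intro a b
      refine ⟨max a b, ?_, ?_⟩
      · exact Set.union_subset_union_right _ (Set.image_mono fun k hk =>
          lt_of_lt_of_le hk (le_max_left a b))
      · exact Set.union_subset_union_right _ (Set.image_mono fun k hk =>
          lt_of_lt_of_le hk (le_max_right a b))
    · exact hAind
  have hvinj : Function.Injective v := by
    intro a b hab
    by_contra hne
    rcases lt_or_gt_of_ne hne with hlt | hlt
    · apply hxW b
      apply Submodule.mem_sup_right
      apply Submodule.subset_span
      exact ⟨⟨a, hlt⟩, hab⟩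
    · apply hxW a
      apply Submodule.mem_sup_right
      apply Submodule.subset_span
      exact ⟨⟨b, hlt⟩, hab.symm⟩
  have hrvind : LinearIndependent ℝ (fun y : ↥(Set.range v) => (y : ι → ℝ)) :=
    LinearIndepOn.mono (v := id) hUind Set.subset_union_right
  refine ⟨Submodule.span ℝ (Set.range v), ?_, ?_, ?_, ?_⟩
  · rw [Submodule.span_le]
    rintro w ⟨n, rfl⟩
    exact (x n).2
  · rw [rank_span_set hrvind]
    have h := Cardinal.mk_range_eq_of_injective hvinj
    simpa using h
  · intro w hw
    rw [mem_closure_iff]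
    intro O hO hwO
    obtain ⟨σ, m, hσ⟩ := aux_pinet φ u hrepr ⟨w, hw⟩ O hO hwO
    obtain ⟨n, hn⟩ := hen (σ, m)
    refine ⟨v n, hσ (x n) ?_, Submodule.subset_span ⟨n, rfl⟩⟩
    have := hxN n
    rw [hn] at this
    exact this
  · rw [← disjoint_iff]
    have hdis : Disjoint {y : ↥(sB ∪ Set.range v) | (y : ι → ℝ) ∈ Set.range v}
        {y : ↥(sB ∪ Set.range v) | (y : ι → ℝ) ∈ sB} := by
      rw [Set.disjoint_left]
      rintro y hy1 hy2
      rcases hy1 with ⟨n, hn⟩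
      refine hxW n (Submodule.mem_sup_left ?_)
      rw [← hspan_sB]
      refine Submodule.subset_span ?_
      rw [hn]
      exact hy2
    have := hUind.disjoint_span_image hdis
    have himg1 : (fun y : ↥(sB ∪ Set.range v) => (y : ι → ℝ)) ''
        {y | (y : ι → ℝ) ∈ Set.range v} = Set.range v := by
      apply Set.Subset.antisymm
      · rintro w ⟨y, hy, rfl⟩; exact hy
      · rintro w ⟨n, rfl⟩
        exact ⟨⟨v n, Or.inr ⟨n, rfl⟩⟩, ⟨n, rfl⟩, rfl⟩
    have himg2 : (fun y : ↥(sB ∪ Set.range v) => (y : ι → ℝ)) ''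
        {y | (y : ι → ℝ) ∈ sB} = sB := by
      apply Set.Subset.antisymm
      · rintro w ⟨y, hy, rfl⟩; exact hy
      · rintro w hwsB
        exact ⟨⟨w, Or.inl hwsB⟩, hwsB, rfl⟩
    rw [himg1, himg2, hspan_sB] at this
    exact this


open Set Function Cardinal

theorem dense_countable_dimensional_subspace_avoiding
    (ι : Type) [Infinite ι] (hκ : Cardinal.mk ι ≤ Cardinal.continuum)
    (L S : Submodule ℝ (ι → ℝ)) (hL : IsClosed (L : Set (ι → ℝ)))
    (hdimL : Cardinal.aleph0 ≤ Module.rank ℝ L)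
    (hdimS : Module.rank ℝ S < Cardinal.continuum) :
    ∃ M : Submodule ℝ (ι → ℝ), M ≤ L ∧
      Module.rank ℝ M = Cardinal.aleph0 ∧
      (L : Set (ι → ℝ)) ⊆ closure (M : Set (ι → ℝ)) ∧
      M ⊓ S = ⊥ := by
  classical
  set e : ι → (↥L →ₗ[ℝ] ℝ) := fun i => (LinearMap.proj i).comp L.subtype with he
  set Φ : Submodule ℝ (↥L →ₗ[ℝ] ℝ) := Submodule.span ℝ (Set.range e) with hΦ
  set bas := Module.Basis.ofVectorSpace ℝ ↥Φ with hbas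
  set φ : ↥(Module.Basis.ofVectorSpaceIndex ℝ ↥Φ) → (↥L →ₗ[ℝ] ℝ) :=
    fun b => ((b : ↥Φ) : ↥L →ₗ[ℝ] ℝ) with hφdef
  have hememΦ : ∀ i, e i ∈ Φ := fun i => Submodule.subset_span ⟨i, rfl⟩
  have hφcomp : (⇑Φ.subtype ∘ ⇑bas) = φ := by
    funext b
    rw [hφdef, hbas]
    simp [Module.Basis.coe_ofVectorSpace]
  have hφind : LinearIndependent ℝ φ := by
    rw [← hφcomp]
    exact bas.linearIndependent.map' Φ.subtype (Submodule.ker_subtype Φ)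
  have hφspan : Submodule.span ℝ (Set.range φ) = Φ := by
    rw [← hφcomp, Set.range_comp, Submodule.span_image, Module.Basis.span_eq, Submodule.map_top,
      Submodule.range_subtype]
  have hspan_e : ∀ i, e i ∈ Submodule.span ℝ (Set.range φ) := by
    intro i
    rw [hφspan]
    exact hememΦ i
  have hmem_φ : ∀ b, φ b ∈ Submodule.span ℝ (Set.range e) := fun b => (b : ↥Φ).2
  have hTsurj : Function.Surjective
      (LinearMap.pi φ : ↥L →ₗ[ℝ] (↥(Module.Basis.ofVectorSpaceIndex ℝ ↥Φ) → ℝ)) :=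
    aux_surjective_T hL φ hφind hspan_e hmem_φ
  have hTinj : Function.Injective
      (LinearMap.pi φ : ↥L →ₗ[ℝ] (↥(Module.Basis.ofVectorSpaceIndex ℝ ↥Φ) → ℝ)) := by
    intro x y hxy
    have hsub : ∀ ψ, ψ ∈ Φ → (ψ : ↥L →ₗ[ℝ] ℝ) x = ψ y := by
      intro ψ hψ
      rw [← hφspan] at hψ
      induction hψ using Submodule.span_induction with
      | mem f hf =>
          rcases hf with ⟨b, rfl⟩
          have := congrFun hxy b
          simpa [LinearMap.pi_apply] using this
      | zero => simp
      | add f g' hf hg' ihf ihg => simp [LinearMap.add_apply, ihf, ihg]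
      | smul c f hf ih => simp [LinearMap.smul_apply, ih]
    apply Subtype.ext
    funext i
    exact hsub (e i) (hememΦ i)
  have hBinf : Infinite ↥(Module.Basis.ofVectorSpaceIndex ℝ ↥Φ) := by
    rw [← not_finite_iff_infinite]
    intro hfin
    have h1 : Module.rank ℝ ↥L ≤ Module.rank ℝ (↥(Module.Basis.ofVectorSpaceIndex ℝ ↥Φ) → ℝ) :=
      LinearMap.rank_le_of_injective _ hTinj
    have h2 : Module.rank ℝ (↥(Module.Basis.ofVectorSpaceIndex ℝ ↥Φ) → ℝ) < Cardinal.aleph0 :=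
      Module.rank_lt_aleph0 ℝ _
    exact absurd hdimL (not_le.2 (lt_of_le_of_lt h1 h2))
  haveI := hBinf
  have hcard : #↥(Module.Basis.ofVectorSpaceIndex ℝ ↥Φ) ≤ 𝔠 := by
    have h1 : #↥(Module.Basis.ofVectorSpaceIndex ℝ ↥Φ) = Module.rank ℝ ↥Φ := Module.Basis.mk_eq_rank'' bas
    have h2 : Module.rank ℝ ↥Φ ≤ #↥(Set.range e) := by
      rw [hΦ]
      exact rank_span_le _
    exact h1 ▸ (h2.trans (Cardinal.mk_range_le.trans hκ))
  have hcantor : #↥(Module.Basis.ofVectorSpaceIndex ℝ ↥Φ) ≤ #(ℕ → Bool) := by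
    have : #(ℕ → Bool) = 𝔠 := by
      rw [Cardinal.mk_arrow]
      simp only [Cardinal.mk_bool, Cardinal.lift_id', Cardinal.mk_nat, Cardinal.lift_two,
        Cardinal.lift_aleph0]
      exact Cardinal.two_power_aleph0
    rw [this]
    exact hcard
  obtain ⟨u⟩ := (Cardinal.le_def _ _).1 hcantor
  have hrepr : ∀ i : ι, ∃ r : (↥(Module.Basis.ofVectorSpaceIndex ℝ ↥Φ)) →₀ ℝ,
      e i = r.sum fun b c => c • φ b := by
    intro i
    refine ⟨bas.repr ⟨e i, hememΦ i⟩, ?_⟩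
    have h1 := Module.Basis.linearCombination_repr bas ⟨e i, hememΦ i⟩
    have h2 : (Finsupp.linearCombination ℝ ⇑bas) (bas.repr ⟨e i, hememΦ i⟩)
        = (bas.repr ⟨e i, hememΦ i⟩).sum fun b c => c • bas b := Finsupp.linearCombination_apply _ _
    calc e i = Φ.subtype ⟨e i, hememΦ i⟩ := rfl
      _ = Φ.subtype ((bas.repr ⟨e i, hememΦ i⟩).sum fun b c => c • bas b) := by
          rw [← h2, h1]
      _ = (bas.repr ⟨e i, hememΦ i⟩).sum fun b c => c • φ b := by
          rw [map_finsuppSum]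
          apply Finsupp.sum_congr
          intro b _
          rw [map_smul]
          congr 1
          exact congrFun hφcomp b
  exact aux_main L S φ u hTsurj hrepr hdimS
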